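/- Let Z^* be a cochain complex of Hilbert modules (or inner-product modules) over a ring with involution, with adjointable differentials D_Z, such that Im(D_Z: Z^{m-1} → Z^m) is closed and Z^m decomposes orthogonally as Im(D_Z: Z^{m-1} → Z^m) ⊕ Ker(D_Z^*: Z^m → Z^{m-1}), and Z^{m-1} decomposes as Ker(D_Z: Z^{m-1} → Z^m) ⊕ Im(D_Z^*: Z^m → Z^{m-1}). Define W^* by W^i = Z^i for i ∉ {m-1, m}, W^{m-1} = Ker(D_Z: Z^{m-1} → Z^m), W^m = Ker(D_Z^*: Z^m → Z^{m-1}), with the induced differentials and zero differential W^{m-1} → W^m. Let p: Z^* → W^* be orthogonal projection and i: W^* → Z^* inclusion, and let L = D_Z^* (D_Z D_Z^*|_{Im D_Z})^{-1} on Im(D_Z) ⊂ Z^m and L = 0 elsewhere. Then p and i are cochain maps, p∘i = 1, i∘p = 1 − D_Z L − L D_Z, and L i = 0, p L = 0; hence Z^* and W^* are doubly homotopy equivalent. -/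

import Mathlib

/-- Splitting off the middle cohomology of a complex `Z` of inner-product modules with
adjointable differentials.  Here the two "middle" degrees of the construction are
`m` and `m + 1` (corresponding to degrees `m-1`, `m` of the paper).  The subcomplex
`W` is encoded by the family of submodules `K`, with `K i = Z i` off the middle
degrees, `K m = Ker(D)`, `K (m+1) = Ker(D*)`, induced differentials and the zero
differential `K m → K (m+1)`; `p` is the orthogonal projection onto `K`, `i` is the
inclusion and `L = D*(DD*|_{Im D})⁻¹` on `Im(D) ⊆ Z^{m+1}` and `0` elsewhere.
Conclusion: `p` and the inclusion are cochain maps, `p ∘ i = 1`,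
`i ∘ p = 1 - D L - L D`, `L ∘ i = 0`, `p ∘ L = 0`; hence `Z` and `W` are doubly
homotopy equivalent. -/
theorem stmt_3 (m : ℤ) (Z : ℤ → Type*)
    [∀ i, NormedAddCommGroup (Z i)] [∀ i, InnerProductSpace ℂ (Z i)]
    (D : ∀ i, Z i →ₗ[ℂ] Z (i + 1)) (Dstar : ∀ i, Z (i + 1) →ₗ[ℂ] Z i)
    (hadj : ∀ i (x : Z i) (y : Z (i + 1)), (inner ℂ (D i x) y : ℂ) = inner ℂ x (Dstar i y))
    (hD2 : ∀ i (x : Z i), D (i + 1) (D i x) = 0)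
    -- `Z^{m+1} = Im(D) ⊕ Ker(D*)` (closed image, orthogonal decomposition)
    (hdec1 : ∀ z : Z (m + 1), ∃ y : Z m, z - D m y ∈ LinearMap.ker (Dstar m))
    -- `Z^m = Ker(D) ⊕ Im(D*)`
    (hdec2 : ∀ z : Z m, ∃ y : Z (m + 1), z - Dstar m y ∈ LinearMap.ker (D m))
    -- the degree `-1` operator `L = D* (D D*|_{Im D})⁻¹` on `Im(D) ⊆ Z^{m+1}`, zero
    -- elsewhere (these properties characterize it uniquely):
    (L : ∀ i, Z (i + 1) →ₗ[ℂ] Z i)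
    (hL0 : ∀ i, i ≠ m → L i = 0)
    (hLker : ∀ z : Z (m + 1), Dstar m z = 0 → L m z = 0)
    (hLinv : ∀ y : Z m, D m (L m (D m y)) = D m y)
    (hLran : ∀ y : Z m, ∃ w : Z (m + 1), L m (D m y) = Dstar m w)
    -- the subcomplex `W`, encoded by submodules `K i ⊆ Z i`:
    (K : ∀ i, Submodule ℂ (Z i))
    (hKo : ∀ i, i ≠ m → i ≠ m + 1 → K i = ⊤)
    (hKm : K m = LinearMap.ker (D m))
    (hKm1 : K (m + 1) = LinearMap.ker (Dstar m))
    -- `p` is the orthogonal projection of `Z` onto `K`: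
    (p : ∀ i, Z i →ₗ[ℂ] Z i)
    (hpmem : ∀ i (x : Z i), p i x ∈ K i)
    (hportho : ∀ i (x : Z i), ∀ y ∈ K i, (inner ℂ (x - p i x) y : ℂ) = 0) :
    -- `p` is a cochain map (to `W` with its induced differential, which is zero
    -- from degree `m` to degree `m+1`):
    ((∀ i, i ≠ m → ∀ x : Z i, p (i + 1) (D i x) = D i (p i x)) ∧
      (∀ x : Z m, p (m + 1) (D m x) = 0)) ∧
    -- the inclusion `i : W → Z` is a cochain map:
    ((∀ i, i ≠ m → ∀ x ∈ K i, D i x ∈ K (i + 1)) ∧ (∀ x ∈ K m, D m x = 0)) ∧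
    -- `p ∘ i = 1`:
    (∀ i, ∀ x ∈ K i, p i x = x) ∧
    -- `i ∘ p = 1 - D L - L D`:
    (∀ i (x : Z (i + 1)), p (i + 1) x = x - D i (L i x) - L (i + 1) (D (i + 1) x)) ∧
    -- `L ∘ i = 0`:
    (∀ i, ∀ x ∈ K (i + 1), L i x = 0) ∧
    -- `p ∘ L = 0`:
    (∀ i (x : Z (i + 1)), p i (L i x) = 0) := by
  -- uniqueness of the orthogonal projection
  have huniq : ∀ (i : ℤ) (x a : Z i), a ∈ K i →
      (∀ y ∈ K i, (inner ℂ (x - a) y : ℂ) = 0) → p i x = a := by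
    intro i x a ha hperp
    have h1 : p i x - a ∈ K i := Submodule.sub_mem _ (hpmem i x) ha
    have h2 : (inner ℂ (p i x - a) (p i x - a) : ℂ) = 0 := by
      have e : (x - a) - (x - p i x) = p i x - a := by abel
      have h4 : (inner ℂ ((x - a) - (x - p i x)) (p i x - a) : ℂ) = 0 := by
        rw [inner_sub_left, hperp _ h1, hportho i x _ h1, sub_zero]
      rwa [e] at h4
    have h3 : p i x - a = 0 := inner_self_eq_zero.mp h2
    exact sub_eq_zero.mp h3
  -- `p ∘ i = 1`
  have hpi : ∀ i, ∀ x ∈ K i, p i x = x := by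
    intro i x hx
    exact huniq i x x hx (by intro y hy; simp)
  have hpt : ∀ i, i ≠ m → i ≠ m + 1 → ∀ x : Z i, p i x = x := by
    intro i h1 h2 x
    exact hpi i x (by rw [hKo i h1 h2]; trivial)
  -- adjoint helpers
  have hadj' : ∀ (i : ℤ) (w : Z (i + 1)) (k : Z i), D i k = 0 →
      (inner ℂ (Dstar i w) k : ℂ) = 0 := by
    intro i w k hk
    have h1 : (inner ℂ k (Dstar i w) : ℂ) = 0 := by
      rw [← hadj, hk, inner_zero_left]
    rw [← inner_conj_symm, h1, map_zero]
  have hadjD : ∀ (i : ℤ) (x : Z i) (k : Z (i + 1)), Dstar i k = 0 →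
      (inner ℂ (D i x) k : ℂ) = 0 := by
    intro i x k hk
    rw [hadj, hk, inner_zero_right]
  refine ⟨⟨?_, ?_⟩, ⟨?_, ?_⟩, hpi, ?_, ?_, ?_⟩
  · -- p is a cochain map (off the middle degree)
    intro i hi x
    by_cases h1 : i + 1 = m
    · subst h1
      rw [hpt i (by omega) (by omega) x]
      exact hpi (i + 1) (D i x) (by rw [hKm]; exact LinearMap.mem_ker.mpr (hD2 i x))
    · by_cases h2 : i = m + 1
      · subst h2
        rw [hpt (m + 1 + 1) (by omega) (by omega)]
        obtain ⟨y, hk⟩ := hdec1 (x - p (m + 1) x)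
        have hkK : x - p (m + 1) x - D m y ∈ K (m + 1) := by rw [hKm1]; exact hk
        have e1 : (inner ℂ (x - p (m + 1) x) (x - p (m + 1) x - D m y) : ℂ) = 0 :=
          hportho (m + 1) x _ hkK
        have e2 : (inner ℂ (D m y) (x - p (m + 1) x - D m y) : ℂ) = 0 :=
          hadjD m y _ (LinearMap.mem_ker.mp hk)
        have e3 : (inner ℂ (x - p (m + 1) x - D m y) (x - p (m + 1) x - D m y) : ℂ) = 0 := by
          rw [inner_sub_left, e1, e2, sub_zero]
        have e4 : x - p (m + 1) x - D m y = 0 := inner_self_eq_zero.mp e3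
        have e5 : x - p (m + 1) x = D m y := sub_eq_zero.mp e4
        have e6 : D (m + 1) (x - p (m + 1) x) = 0 := by rw [e5]; exact hD2 m y
        rw [map_sub] at e6
        exact (sub_eq_zero.mp e6).symm.symm
      · have h3 : i + 1 ≠ m + 1 := by omega
        rw [hpt i hi h2 x, hpt (i + 1) h1 h3]
  · -- p D = 0 in the middle
    intro x
    refine huniq (m + 1) (D m x) 0 (Submodule.zero_mem _) ?_
    intro y hy
    rw [sub_zero]
    exact hadjD m x y (by rw [hKm1] at hy; exact LinearMap.mem_ker.mp hy)
  · -- inclusion is a cochain map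
    intro i hi x hx
    by_cases h1 : i + 1 = m
    · subst h1
      rw [hKm]
      exact LinearMap.mem_ker.mpr (hD2 i x)
    · rw [hKo (i + 1) h1 (by omega)]; trivial
  · intro x hx
    rw [hKm] at hx
    exact LinearMap.mem_ker.mp hx
  · -- i ∘ p = 1 - D L - L D
    intro i x
    by_cases h1 : i = m
    · subst i
      rw [hL0 (m + 1) (by omega)]
      simp only [LinearMap.zero_apply, sub_zero]
      obtain ⟨y, hk⟩ := hdec1 x
      have e1 : L m (x - D m y) = 0 := hLker _ (LinearMap.mem_ker.mp hk)
      have e2 : L m x = L m (D m y) := by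
        have h := map_sub (L m) x (D m y)
        rw [e1] at h
        exact sub_eq_zero.mp h.symm
      have e3 : D m (L m x) = D m y := by rw [e2, hLinv y]
      rw [e3]
      refine huniq (m + 1) x (x - D m y) (by rw [hKm1]; exact hk) ?_
      intro z hz
      have e : x - (x - D m y) = D m y := by abel
      rw [e]
      exact hadjD m y z (by rw [hKm1] at hz; exact LinearMap.mem_ker.mp hz)
    · by_cases h2 : i + 1 = m
      · subst h2
        rw [hL0 i (by omega)]
        simp only [LinearMap.zero_apply, map_zero, sub_zero]
        refine huniq (i + 1) x (x - L (i + 1) (D (i + 1) x)) ?_ ?_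
        · rw [hKm]
          refine LinearMap.mem_ker.mpr ?_
          rw [map_sub, hLinv x, sub_self]
        · intro z hz
          obtain ⟨w, hw⟩ := hLran x
          have hz' : D (i + 1) z = 0 := by rw [hKm] at hz; exact LinearMap.mem_ker.mp hz
          have e : x - (x - L (i + 1) (D (i + 1) x)) = L (i + 1) (D (i + 1) x) := by abel
          rw [e, hw]
          exact hadj' (i + 1) w z hz'
      · rw [hL0 i h1, hL0 (i + 1) h2]
        simp only [LinearMap.zero_apply, map_zero, sub_zero]
        exact hpt (i + 1) h2 (by omega) x
  · -- L ∘ i = 0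
    intro i x hx
    by_cases h1 : i = m
    · subst i
      rw [hKm1] at hx
      exact hLker x (LinearMap.mem_ker.mp hx)
    · rw [hL0 i h1]; rfl
  · -- p ∘ L = 0
    intro i x
    by_cases h1 : i = m
    · subst i
      obtain ⟨y, hk⟩ := hdec1 x
      have e1 : L m (x - D m y) = 0 := hLker _ (LinearMap.mem_ker.mp hk)
      have e2 : L m x = L m (D m y) := by
        have h := map_sub (L m) x (D m y)
        rw [e1] at h
        exact sub_eq_zero.mp h.symm
      obtain ⟨w, hw⟩ := hLran y
      refine huniq m (L m x) 0 (Submodule.zero_mem _) ?_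
      intro z hz
      rw [sub_zero, e2, hw]
      exact hadj' m w z (by rw [hKm] at hz; exact LinearMap.mem_ker.mp hz)
    · rw [hL0 i h1]
      simp
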